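/- arXiv:1306.2887 — 3 statements merged into one kernel-verified Lean document; each statement's English description precedes it below -/
import Mathlib

section
/- Let 1 ≤ l ≤ n and let A be an n × n random matrix (complex entries, arbitrary distribution) with columns A₁,…,A_n. Suppose that to each pair (j₀, J₀) ∈ Λ(n,l) there corresponds an integer l' ≤ n and an l' × n matrix P = P(n, l, A, j₀, J₀) such that (i) ‖P‖ ≤ 1 and (ii) P A_j = 0 for every j ∉ {j₀} ∪ J₀. Let α, κ > 0, w > 0, and set W = w/(κ l) + √2/α. Then P_A( L_{W,w} ) ≤ 2n · E_{(j₀,J₀)} P_A( B_{α,κ}^c | (j₀, J₀) ), where L_{W,w} = { ∃ v ∈ ℂⁿ, ‖v‖₂ = 1, with ‖v‖_∞ > W √(l/n) and ‖Av‖₂ ≤ w/√n } and B_{α,κ} = { ‖P A_{j₀}‖₂ ≥ α ‖P A_{J₀}‖ and ‖P A_{j₀}‖₂ ≥ κ √l }, with A_{J₀} the submatrix of A formed by the columns indexed by J₀. -/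
open MeasureTheory ProbabilityTheory
open scoped ENNReal NNReal

noncomputable section

/-- The Euclidean norm of a complex vector. -/
def e2 {ι : Type*} [Fintype ι] (v : ι → ℂ) : ℝ := Real.sqrt (∑ i, ‖v i‖ ^ 2)

/-- The sup norm of a complex vector. -/
def einf {n : ℕ} (v : Fin n → ℂ) : ℝ := ⨆ i, ‖v i‖

/-- The operator norm of a complex matrix, `‖A‖ = max_{‖x‖₂ = 1} ‖Ax‖₂`. -/
def opC {ι κ : Type*} [Fintype ι] [Fintype κ] (A : Matrix ι κ ℂ) : ℝ :=
  sSup {r : ℝ | ∃ x : κ → ℂ, e2 x = 1 ∧ r = e2 (A.mulVec x)}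

/-- `Λ(n,l)`: the set of pairs `(j₀, J₀)` with `j₀ ∈ [n]`, `J₀ ⊆ [n] \ {j₀}`,
`|J₀| = l - 1`. -/
def Lam (n l : ℕ) : Type :=
  {p : Fin n × Finset (Fin n) // p.1 ∉ p.2 ∧ p.2.card = l - 1}

instance (n l : ℕ) : Fintype (Lam n l) := by unfold Lam; infer_instance

lemma e2_eq_norm {ι : Type*} [Fintype ι] (v : ι → ℂ) :
    e2 v = ‖(WithLp.equiv 2 (ι → ℂ)).symm v‖ := by
  rw [EuclideanSpace.norm_eq]; rfl

lemma e2_nonneg {ι : Type*} [Fintype ι] (v : ι → ℂ) : 0 ≤ e2 v := Real.sqrt_nonneg _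

lemma e2_smul {ι : Type*} [Fintype ι] (c : ℂ) (v : ι → ℂ) : e2 (c • v) = ‖c‖ * e2 v := by
  rw [e2_eq_norm, e2_eq_norm]
  have : (WithLp.equiv 2 (ι → ℂ)).symm (c • v) = c • (WithLp.equiv 2 (ι → ℂ)).symm v := rfl
  rw [this, norm_smul]

lemma e2_sub_le {ι : Type*} [Fintype ι] (v w : ι → ℂ) : e2 (v - w) ≤ e2 v + e2 w := by
  rw [e2_eq_norm, e2_eq_norm, e2_eq_norm]
  have : (WithLp.equiv 2 (ι → ℂ)).symm (v - w)
      = (WithLp.equiv 2 (ι → ℂ)).symm v - (WithLp.equiv 2 (ι → ℂ)).symm w := rfl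
  rw [this]; exact norm_sub_le _ _

lemma e2_zero {ι : Type*} [Fintype ι] : e2 (0 : ι → ℂ) = 0 := by
  rw [e2_eq_norm]
  have : (WithLp.equiv 2 (ι → ℂ)).symm 0 = 0 := rfl
  rw [this, norm_zero]

lemma e2_eq_zero {ι : Type*} [Fintype ι] {v : ι → ℂ} (h : e2 v = 0) : v = 0 := by
  rw [e2_eq_norm] at h
  have := norm_eq_zero.mp h
  have : v = 0 := congrArg (WithLp.equiv 2 (ι → ℂ)) this
  exact this

lemma opC_bdd {ι κ : Type*} [Fintype ι] [Fintype κ] [DecidableEq κ] (A : Matrix ι κ ℂ) :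
    BddAbove {r : ℝ | ∃ x : κ → ℂ, e2 x = 1 ∧ r = e2 (A.mulVec x)} := by
  classical
  refine ⟨‖(Matrix.toEuclideanLin A).toContinuousLinearMap‖, ?_⟩
  rintro r ⟨x, hx, rfl⟩
  have h1 : e2 (A.mulVec x) = ‖(Matrix.toEuclideanLin A).toContinuousLinearMap
      ((WithLp.equiv 2 (κ → ℂ)).symm x)‖ := by
    rw [e2_eq_norm]; rfl
  rw [h1]
  calc _ ≤ ‖(Matrix.toEuclideanLin A).toContinuousLinearMap‖ *
      ‖(WithLp.equiv 2 (κ → ℂ)).symm x‖ := (Matrix.toEuclideanLin A).toContinuousLinearMap.le_opNorm _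
    _ = _ := by rw [← e2_eq_norm, hx, mul_one]

lemma opC_nonneg {ι κ : Type*} [Fintype ι] [Fintype κ] (A : Matrix ι κ ℂ) : 0 ≤ opC A :=
  Real.sSup_nonneg (by rintro r ⟨x, hx, rfl⟩; exact e2_nonneg _)

lemma e2_mulVec_le {ι κ : Type*} [Fintype ι] [Fintype κ] [DecidableEq κ]
    (A : Matrix ι κ ℂ) (x : κ → ℂ) : e2 (A.mulVec x) ≤ opC A * e2 x := by
  classical
  rcases eq_or_ne (e2 x) 0 with h0 | h0
  · have : x = 0 := e2_eq_zero h0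
    subst this
    rw [Matrix.mulVec_zero, e2_zero, h0, mul_zero]
  · have hpos : 0 < e2 x := lt_of_le_of_ne (e2_nonneg x) (Ne.symm h0)
    set c : ℂ := (e2 x : ℝ)⁻¹
    have hc : ‖c‖ = (e2 x)⁻¹ := by
      simp [c, abs_of_pos hpos]
    have hu : e2 (c • x) = 1 := by
      rw [e2_smul, hc]; field_simp
    have hmem : e2 (A.mulVec (c • x)) ∈ {r : ℝ | ∃ y : κ → ℂ, e2 y = 1 ∧ r = e2 (A.mulVec y)} :=
      ⟨c • x, hu, rfl⟩
    have hle : e2 (A.mulVec (c • x)) ≤ opC A := le_csSup (opC_bdd A) hmem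
    have hsmul : A.mulVec (c • x) = c • A.mulVec x := by
      rw [Matrix.mulVec_smul]
    rw [hsmul, e2_smul, hc] at hle
    calc e2 (A.mulVec x) = ((e2 x)⁻¹ * e2 (A.mulVec x)) * e2 x := by field_simp
      _ ≤ opC A * e2 x := by
          apply mul_le_mul_of_nonneg_right hle (le_of_lt hpos)

lemma core_lemma (n l : ℕ) (hl1 : 1 ≤ l) (hln : l ≤ n)
    (α κ w : ℝ) (hα : 0 < α) (hκ : 0 < κ) (hw : 0 < w)
    (v : Fin n → ℂ) (hv : e2 v = 1)
    (j₀ : Fin n) (J₀ : Finset (Fin n)) (hj₀ : j₀ ∉ J₀)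
    (hsum : ∑ j ∈ J₀, ‖v j‖ ^ 2 ≤ 2 * ((l : ℝ) / n))
    (l'' : ℕ) (Q : Matrix (Fin l'') (Fin n) ℂ) (B : Matrix (Fin n) (Fin n) ℂ)
    (hQ : opC Q ≤ 1)
    (hker : ∀ j : Fin n, j ≠ j₀ → j ∉ J₀ → Q.mulVec (fun i => B i j) = 0)
    (hAv : e2 (B.mulVec v) ≤ w / Real.sqrt n)
    (hB1 : α * opC (Matrix.of fun (r : Fin l'') (j : {x // x ∈ J₀}) =>
        Q.mulVec (fun i => B i j.1) r) ≤ e2 (Q.mulVec (fun i => B i j₀)))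
    (hB2 : κ * Real.sqrt l ≤ e2 (Q.mulVec (fun i => B i j₀))) :
    ‖v j₀‖ ≤ (w / (κ * l) + Real.sqrt 2 / α) * Real.sqrt ((l : ℝ) / n) := by
  classical
  set col : Fin n → Fin n → ℂ := fun j => fun i => B i j with hcol
  set N : Matrix (Fin l'') {x // x ∈ J₀} ℂ :=
    Matrix.of fun (r : Fin l'') (j : {x // x ∈ J₀}) => Q.mulVec (col j.1) r with hN
  set vJ : {x // x ∈ J₀} → ℂ := fun j => v j.1 with hvJ
  set q : ℝ := e2 (Q.mulVec (col j₀)) with hqdef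
  have hl0 : (0 : ℝ) < l := by exact_mod_cast hl1
  have hn0 : (0 : ℝ) < n := by exact_mod_cast lt_of_lt_of_le hl1 hln
  have hsl : (0 : ℝ) < Real.sqrt l := Real.sqrt_pos.mpr hl0
  have hsn : (0 : ℝ) < Real.sqrt n := Real.sqrt_pos.mpr hn0
  have hq0 : 0 < q := lt_of_lt_of_le (by positivity) hB2
  -- decomposition
  have hBv : B.mulVec v = ∑ j, v j • col j := by
    ext i
    simp only [Matrix.mulVec, dotProduct, Finset.sum_apply, Pi.smul_apply,
      smul_eq_mul, hcol]
    exact Finset.sum_congr rfl fun j _ => mul_comm _ _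
  have hdec : Q.mulVec (B.mulVec v) = ∑ j, v j • Q.mulVec (col j) := by
    rw [hBv]
    have := map_sum Q.mulVecLin (fun j => v j • col j) Finset.univ
    simp only [Matrix.mulVecLin_apply] at this
    rw [this]
    exact Finset.sum_congr rfl fun j _ => Matrix.mulVec_smul _ _ _
  have hNv : N.mulVec vJ = ∑ j ∈ J₀, v j • Q.mulVec (col j) := by
    ext r
    simp only [Matrix.mulVec, dotProduct, hN, Matrix.of_apply, Finset.sum_apply,
      Pi.smul_apply, smul_eq_mul, hvJ]
    rw [← Finset.sum_coe_sort J₀ (fun j => v j * (∑ i, Q r i * col j i))]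
    exact Finset.sum_congr rfl fun j _ => mul_comm _ _
  have hdec2 : Q.mulVec (B.mulVec v) = v j₀ • Q.mulVec (col j₀) + N.mulVec vJ := by
    rw [hdec, hNv, ← Finset.sum_subset (Finset.subset_univ (insert j₀ J₀))]
    · rw [Finset.sum_insert hj₀]
    · intro j _ hj
      simp only [Finset.mem_insert, not_or] at hj
      rw [hker j hj.1 hj.2, smul_zero]
  -- norms
  have hvJ2 : e2 vJ ≤ Real.sqrt (2 * ((l : ℝ) / n)) := by
    have he : e2 vJ = Real.sqrt (∑ j ∈ J₀, ‖v j‖ ^ 2) := by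
      unfold e2
      congr 1
      exact Finset.sum_coe_sort J₀ (fun j => ‖v j‖ ^ 2)
    rw [he]
    exact Real.sqrt_le_sqrt hsum
  have hNle : opC N ≤ q / α := by
    rw [le_div_iff₀ hα, mul_comm]
    exact hB1
  have key : ‖v j₀‖ * q ≤ w / Real.sqrt n + (q / α) * Real.sqrt (2 * ((l : ℝ) / n)) := by
    have h1 : ‖v j₀‖ * q = e2 (v j₀ • Q.mulVec (col j₀)) := (e2_smul _ _).symm
    have h2 : v j₀ • Q.mulVec (col j₀) = Q.mulVec (B.mulVec v) - N.mulVec vJ := by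
      rw [hdec2]; ring
    rw [h1, h2]
    have t1 : opC Q * e2 (B.mulVec v) ≤ 1 * (w / Real.sqrt n) :=
      mul_le_mul hQ hAv (e2_nonneg _) zero_le_one
    have t2 : opC N * e2 vJ ≤ (q / α) * Real.sqrt (2 * ((l : ℝ) / n)) :=
      mul_le_mul hNle hvJ2 (e2_nonneg _) (by positivity)
    have t3 := e2_mulVec_le Q (B.mulVec v)
    have t4 := e2_mulVec_le N vJ
    have t5 := e2_sub_le (Q.mulVec (B.mulVec v)) (N.mulVec vJ)
    linarith
  -- divide by q
  have step : ‖v j₀‖ ≤ w / Real.sqrt n / q + Real.sqrt (2 * ((l : ℝ) / n)) / α := by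
    have h3 : ‖v j₀‖ ≤ (w / Real.sqrt n + (q / α) * Real.sqrt (2 * ((l : ℝ) / n))) / q := by
      rw [le_div_iff₀ hq0]
      exact key
    have heq : (w / Real.sqrt n + (q / α) * Real.sqrt (2 * ((l : ℝ) / n))) / q =
        w / Real.sqrt n / q + Real.sqrt (2 * ((l : ℝ) / n)) * (q / q) / α := by ring
    rw [heq, div_self (ne_of_gt hq0), mul_one] at h3
    exact h3
  have step2 : w / Real.sqrt n / q ≤ w / Real.sqrt n / (κ * Real.sqrt l) := by
    refine div_le_div_of_nonneg_left ?_ ?_ hB2 <;> positivity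
  have hrl : Real.sqrt ((l : ℝ) / n) = Real.sqrt l / Real.sqrt n :=
    Real.sqrt_div (by positivity) _
  have hr2 : Real.sqrt (2 * ((l : ℝ) / n)) = Real.sqrt 2 * (Real.sqrt l / Real.sqrt n) := by
    rw [Real.sqrt_mul (by norm_num : (0:ℝ) ≤ 2), hrl]
  have hll : ((l : ℝ)) = Real.sqrt l * Real.sqrt l := (Real.mul_self_sqrt (by positivity)).symm
  have main : ‖v j₀‖ ≤ w / Real.sqrt n / (κ * Real.sqrt l) +
      Real.sqrt 2 * (Real.sqrt l / Real.sqrt n) / α := by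
    rw [← hr2]
    linarith
  have final : w / Real.sqrt n / (κ * Real.sqrt l) + Real.sqrt 2 * (Real.sqrt l / Real.sqrt n) / α
      = (w / (κ * l) + Real.sqrt 2 / α) * Real.sqrt ((l : ℝ) / n) := by
    rw [hrl]
    field_simp
    linear_combination (w * α) * hll
  linarith [main, final.le, final.ge]

lemma count_filter_mem_le {n : ℕ} (s : Finset (Fin n)) (k : ℕ) (j : Fin n) :
    ((s.powersetCard (k+1)).filter (fun J => j ∈ J)).card ≤ (s.erase j).card.choose k := by
  classical
  rw [← Finset.card_powersetCard]
  apply Finset.card_le_card_of_injOn (fun J => J.erase j)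
  · intro J hJ
    simp only [Finset.mem_coe, Finset.mem_filter, Finset.mem_powersetCard] at hJ
    obtain ⟨⟨hJs, hJc⟩, hjJ⟩ := hJ
    rw [Finset.mem_coe, Finset.mem_powersetCard]
    constructor
    · exact fun x hx => Finset.mem_erase.mpr
        ⟨(Finset.mem_erase.mp hx).1, hJs (Finset.mem_erase.mp hx).2⟩
    · rw [Finset.card_erase_of_mem hjJ, hJc]
      omega
  · intro J₁ h₁ J₂ h₂ he
    simp only [Finset.coe_filter, Set.mem_setOf_eq, Finset.mem_powersetCard] at h₁ h₂
    have e₁ : J₁ = insert j (J₁.erase j) := (Finset.insert_erase h₁.2).symm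
    have e₂ : J₂ = insert j (J₂.erase j) := (Finset.insert_erase h₂.2).symm
    rw [e₁, e₂]
    exact congrArg (insert j) he

lemma double_count {n : ℕ} (s : Finset (Fin n)) (k : ℕ) (f : Fin n → ℝ)
    (hf : ∀ j, 0 ≤ f j) :
    ∑ J ∈ s.powersetCard (k+1), ∑ j ∈ J, f j ≤
      ((s.card - 1).choose k : ℝ) * ∑ j ∈ s, f j := by
  classical
  have h1 : ∀ J ∈ s.powersetCard (k+1), ∑ j ∈ J, f j = ∑ j ∈ s, if j ∈ J then f j else 0 := by
    intro J hJ
    have hJs : J ⊆ s := (Finset.mem_powersetCard.mp hJ).1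
    rw [Finset.sum_ite_mem, Finset.inter_eq_right.mpr hJs]
  rw [Finset.sum_congr rfl h1, Finset.sum_comm]
  have h2 : ∀ j ∈ s, (∑ J ∈ s.powersetCard (k+1), if j ∈ J then f j else 0) ≤
      ((s.card - 1).choose k : ℝ) * f j := by
    intro j hj
    rw [← Finset.sum_filter]
    rw [Finset.sum_const, nsmul_eq_mul]
    apply mul_le_mul_of_nonneg_right _ (hf j)
    have := count_filter_mem_le s k j
    rw [Finset.card_erase_of_mem hj] at this
    exact_mod_cast this
  calc ∑ j ∈ s, (∑ J ∈ s.powersetCard (k+1), if j ∈ J then f j else 0)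
      ≤ ∑ j ∈ s, ((s.card - 1).choose k : ℝ) * f j := Finset.sum_le_sum h2
    _ = ((s.card - 1).choose k : ℝ) * ∑ j ∈ s, f j := by rw [Finset.mul_sum]

lemma count_good (n l : ℕ) (hl1 : 1 ≤ l) (hln : l ≤ n)
    (f : Fin n → ℝ) (hf : ∀ j, 0 ≤ f j) (hS : ∑ j, f j ≤ 1) (j₀ : Fin n) :
    ((n-1).choose (l-1) : ℝ) ≤ 2 *
      ((((Finset.univ.erase j₀).powersetCard (l-1)).filter
        (fun J => ∑ j ∈ J, f j ≤ 2 * ((l:ℝ)/n))).card) := by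
  classical
  have hn1 : 1 ≤ n := le_trans hl1 hln
  have hn0 : (0:ℝ) < n := by exact_mod_cast lt_of_lt_of_le Nat.one_pos hn1
  set s : Finset (Fin n) := Finset.univ.erase j₀ with hs
  have hscard : s.card = n - 1 := by
    rw [hs, Finset.card_erase_of_mem (Finset.mem_univ _), Finset.card_univ, Fintype.card_fin]
  set total := s.powersetCard (l-1) with htotdef
  have htot : total.card = (n-1).choose (l-1) := by
    rw [htotdef, Finset.card_powersetCard, hscard]
  set good := total.filter (fun J => ∑ j ∈ J, f j ≤ 2 * ((l:ℝ)/n)) with hgood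
  set bad := total.filter (fun J => ¬ (∑ j ∈ J, f j ≤ 2 * ((l:ℝ)/n))) with hbad
  have hsplit : good.card + bad.card = total.card := Finset.card_filter_add_card_filter_not _
  rcases Nat.lt_or_ge l 2 with hl2 | hl2
  · -- l = 1
    have : l = 1 := le_antisymm (Nat.lt_succ_iff.mp hl2) hl1
    subst this
    have hbad0 : bad = ∅ := by
      rw [hbad, Finset.filter_eq_empty_iff]
      intro J hJ
      have : J.card = 0 := (Finset.mem_powersetCard.mp hJ).2
      rw [Finset.card_eq_zero.mp this]
      simp only [Finset.sum_empty, not_not]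
      positivity
    have : good.card = total.card := by
      rw [← hsplit, hbad0]; simp
    rw [this, htot]
    have hp : (0:ℝ) ≤ (((n-1).choose (1-1) : ℕ) : ℝ) := by positivity
    linarith
  · -- l ≥ 2
    have hl0 : (0:ℝ) < l := by exact_mod_cast hl1
    have hn2 : 2 ≤ n := le_trans hl2 hln
    have hdc : ∑ J ∈ total, ∑ j ∈ J, f j ≤ ((n-2).choose (l-2) : ℝ) := by
      have hk : l - 1 = (l - 2) + 1 := by omega
      have hsc : s.card - 1 = n - 2 := by omega
      calc ∑ J ∈ total, ∑ j ∈ J, f j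
          ≤ ((s.card - 1).choose (l-2) : ℝ) * ∑ j ∈ s, f j := by
            rw [htotdef, hk]; exact double_count s (l-2) f hf
        _ ≤ ((n-2).choose (l-2) : ℝ) * 1 := by
            rw [hsc]
            apply mul_le_mul_of_nonneg_left _ (by positivity)
            calc ∑ j ∈ s, f j ≤ ∑ j, f j :=
                Finset.sum_le_sum_of_subset_of_nonneg (Finset.subset_univ s)
                  (fun j _ _ => hf j)
              _ ≤ 1 := hS
        _ = ((n-2).choose (l-2) : ℝ) := mul_one _
    have hbadbd : (2 * ((l:ℝ)/n)) * bad.card ≤ ((n-2).choose (l-2) : ℝ) := by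
      calc (2 * ((l:ℝ)/n)) * bad.card = bad.card • (2 * ((l:ℝ)/n)) := by
            rw [nsmul_eq_mul, mul_comm]
        _ ≤ ∑ J ∈ bad, ∑ j ∈ J, f j := Finset.card_nsmul_le_sum bad _ _
            (fun J hJ => le_of_lt (not_le.mp (Finset.mem_filter.mp hJ).2))
        _ ≤ ∑ J ∈ total, ∑ j ∈ J, f j := Finset.sum_le_sum_of_subset_of_nonneg
            (Finset.filter_subset _ _)
            (fun J _ _ => Finset.sum_nonneg (fun j _ => hf j))
        _ ≤ _ := hdc
    -- (n-1) * C(n-2,l-2) = C(n-1,l-1) * (l-1)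
    have hchoose : (n-1) * (n-2).choose (l-2) = (n-1).choose (l-1) * (l-1) := by
      have h1 : n - 1 = (n-2) + 1 := by omega
      have h2 : l - 1 = (l-2) + 1 := by omega
      rw [h1, h2]
      exact Nat.add_one_mul_choose_eq (n-2) (l-2)
    have hchooseR : ((n:ℝ)-1) * ((n-2).choose (l-2) : ℝ) =
        ((n-1).choose (l-1) : ℝ) * ((l:ℝ)-1) := by
      have h := congrArg (Nat.cast : ℕ → ℝ) hchoose
      rw [Nat.cast_mul, Nat.cast_mul, Nat.cast_sub hn1, Nat.cast_sub hl1, Nat.cast_one] at h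
      exact h
    set C1 : ℝ := ((n-1).choose (l-1) : ℝ) with hC1def
    set C2 : ℝ := ((n-2).choose (l-2) : ℝ) with hC2def
    have hCpos : (0:ℝ) ≤ C1 := by positivity
    have hbadnn : (0:ℝ) ≤ (bad.card : ℝ) := by positivity
    have hnl : ((n:ℝ)) * ((l:ℝ)-1) ≤ (l:ℝ) * ((n:ℝ)-1) := by
      have hh : (l:ℝ) ≤ n := by exact_mod_cast hln
      nlinarith
    have hn1' : (0:ℝ) < (n:ℝ) - 1 := by
      have : (2:ℝ) ≤ n := by exact_mod_cast hn2
      linarith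
    have hb : ((bad.card:ℝ)) * (2*l) ≤ C2 * n := by
      have h := mul_le_mul_of_nonneg_right hbadbd (le_of_lt hn0)
      calc ((bad.card:ℝ)) * (2*l) = (2*((l:ℝ)/n)*bad.card)*n := by field_simp
        _ ≤ C2 * n := h
    have h5 : 2*(l:ℝ)*bad.card*((n:ℝ)-1) ≤ C2*n*((n:ℝ)-1) := by nlinarith
    have h6 : C2*(n:ℝ)*((n:ℝ)-1) = C1*(((l:ℝ)-1)*n) := by linear_combination (n:ℝ) * hchooseR
    have h7 : C1*(((l:ℝ)-1)*(n:ℝ)) ≤ C1*((l:ℝ)*((n:ℝ)-1)) := by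
      apply mul_le_mul_of_nonneg_left _ hCpos
      nlinarith
    have h8 : (2*(bad.card:ℝ)) * ((l:ℝ)*((n:ℝ)-1)) ≤ C1 * ((l:ℝ)*((n:ℝ)-1)) := by nlinarith
    have h9 : 2*(bad.card:ℝ) ≤ C1 :=
      le_of_mul_le_mul_right (by linarith [h8]) (by positivity : (0:ℝ) < (l:ℝ)*((n:ℝ)-1))
    have hsp : (total.card : ℝ) = good.card + bad.card := by exact_mod_cast hsplit.symm
    rw [htot] at hsp
    rw [hC1def] at h9
    linarith

lemma card_Lam_le (n l : ℕ) : Fintype.card (Lam n l) ≤ n * (n-1).choose (l-1) := by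
  classical
  have e : Lam n l ≃ Σ j : Fin n, {J : Finset (Fin n) // j ∉ J ∧ J.card = l - 1} :=
    Equiv.subtypeProdEquivSigmaSubtype (fun (j : Fin n) (J : Finset (Fin n)) =>
      j ∉ J ∧ J.card = l - 1)
  rw [Fintype.card_congr e, Fintype.card_sigma]
  apply le_of_eq
  have hj : ∀ j : Fin n, Fintype.card {J : Finset (Fin n) // j ∉ J ∧ J.card = l-1} =
      (n-1).choose (l-1) := by
    intro j
    rw [Fintype.card_subtype]
    have : Finset.univ.filter (fun J : Finset (Fin n) => j ∉ J ∧ J.card = l-1) =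
        (Finset.univ.erase j).powersetCard (l-1) := by
      ext J
      simp only [Finset.mem_filter, Finset.mem_univ, true_and, Finset.mem_powersetCard,
        Finset.subset_erase, Finset.subset_univ, true_and]
    rw [this, Finset.card_powersetCard, Finset.card_erase_of_mem (Finset.mem_univ _),
      Finset.card_univ, Fintype.card_fin]
  calc ∑ j : Fin n, Fintype.card {J : Finset (Fin n) // j ∉ J ∧ J.card = l-1}
      = ∑ _j : Fin n, (n-1).choose (l-1) := Finset.sum_congr rfl (fun j _ => hj j)
    _ = n * (n-1).choose (l-1) := by rw [Finset.sum_const, Finset.card_univ,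
        Fintype.card_fin, smul_eq_mul]

lemma Lam_nonempty (n l : ℕ) (hl1 : 1 ≤ l) (hln : l ≤ n) : Nonempty (Lam n l) := by
  classical
  have hn1 : 1 ≤ n := hl1.trans hln
  have hj : 0 < n := hn1
  set j : Fin n := ⟨0, hj⟩
  have hcard : l - 1 ≤ (Finset.univ.erase j).card := by
    rw [Finset.card_erase_of_mem (Finset.mem_univ _), Finset.card_univ, Fintype.card_fin]
    omega
  obtain ⟨J, hJs, hJc⟩ := Finset.exists_subset_card_eq hcard
  exact ⟨⟨(j, J), ⟨fun h => (Finset.mem_erase.mp (hJs h)).1 rfl, hJc⟩⟩⟩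


/-- **Delocalization from a test projection.**  Suppose that to each pair
`(j₀, J₀) ∈ Λ(n,l)` corresponds a number `l' ≤ n` and an `l' × n` random matrix `P`
with `‖P‖ ≤ 1` whose kernel contains all columns `A_j`, `j ∉ {j₀} ∪ J₀`.  Then
`P(L_{W,w}) ≤ 2n · E_{(j₀,J₀)} P(B_{α,κ}ᶜ | (j₀,J₀))`, where `L_{W,w}` is the
localization event and `B_{α,κ}` the balancing event. -/
theorem delocalization_from_test_projection
    (n l : ℕ) (hl1 : 1 ≤ l) (hln : l ≤ n)
    (Ω : Type) [MeasureSpace Ω] [IsProbabilityMeasure (ℙ : Measure Ω)]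
    (A : Ω → Matrix (Fin n) (Fin n) ℂ)
    (l' : Lam n l → ℕ) (hl'n : ∀ p, l' p ≤ n)
    (P : (p : Lam n l) → Ω → Matrix (Fin (l' p)) (Fin n) ℂ)
    (hPnorm : ∀ p ω, opC (P p ω) ≤ 1)
    (hPker : ∀ (p : Lam n l) (ω : Ω) (j : Fin n), j ≠ p.1.1 → j ∉ p.1.2 →
      (P p ω).mulVec (fun i => A ω i j) = 0)
    (α κ w : ℝ) (hα : 0 < α) (hκ : 0 < κ) (hw : 0 < w)
    (W : ℝ) (hW : W = w / (κ * l) + Real.sqrt 2 / α) :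
    (ℙ {ω : Ω | ∃ v : Fin n → ℂ, e2 v = 1 ∧
        W * Real.sqrt ((l : ℝ) / n) < einf v ∧
        e2 ((A ω).mulVec v) ≤ w / Real.sqrt n}).toReal ≤
      2 * n *
        ((∑ p : Lam n l,
          (ℙ {ω : Ω | ¬ (α * opC (Matrix.of fun (r : Fin (l' p)) (j : {x // x ∈ p.1.2}) =>
                  (P p ω).mulVec (fun i => A ω i j.1) r) ≤
                e2 ((P p ω).mulVec (fun i => A ω i p.1.1)) ∧
              κ * Real.sqrt l ≤ e2 ((P p ω).mulVec (fun i => A ω i p.1.1)))}).toReal) /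
          Fintype.card (Lam n l)) := by
  classical
  have hn1 : 1 ≤ n := hl1.trans hln
  set L : Set Ω := {ω : Ω | ∃ v : Fin n → ℂ, e2 v = 1 ∧
      W * Real.sqrt ((l : ℝ) / n) < einf v ∧
      e2 ((A ω).mulVec v) ≤ w / Real.sqrt n} with hL
  set T : Lam n l → Set Ω := fun p =>
    {ω : Ω | ¬ (α * opC (Matrix.of fun (r : Fin (l' p)) (j : {x // x ∈ p.1.2}) =>
          (P p ω).mulVec (fun i => A ω i j.1) r) ≤
        e2 ((P p ω).mulVec (fun i => A ω i p.1.1)) ∧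
      κ * Real.sqrt l ≤ e2 ((P p ω).mulVec (fun i => A ω i p.1.1)))} with hT
  -- pointwise counting claim
  have hkey : ∀ ω ∈ L, ((n-1).choose (l-1) : ℝ) ≤
      2 * ((Finset.univ.filter (fun p : Lam n l => ω ∈ T p)).card : ℝ) := by
    intro ω hω
    obtain ⟨v, hv, hinf, hAv⟩ := hω
    obtain ⟨j₀, hmax⟩ : ∃ j₀ : Fin n, ∀ i, ‖v i‖ ≤ ‖v j₀‖ := by
      have hne : (Finset.univ : Finset (Fin n)).Nonempty := by
        rw [Finset.univ_nonempty_iff]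
        exact Fin.pos_iff_nonempty.mp (by omega)
      obtain ⟨j₀, _, h⟩ := Finset.exists_max_image Finset.univ (fun i => ‖v i‖) hne
      exact ⟨j₀, fun i => h i (Finset.mem_univ i)⟩
    haveI : Nonempty (Fin n) := ⟨j₀⟩
    have heinf : einf v = ‖v j₀‖ := by
      unfold einf
      exact le_antisymm (ciSup_le hmax) (le_ciSup (f := fun i => ‖v i‖) (Finite.bddAbove_range _) j₀)
    have hsum1 : ∑ j, ‖v j‖^2 = 1 := by
      have h := hv
      unfold e2 at h
      exact Real.sqrt_eq_one.mp h
    have hcg := count_good n l hl1 hln (fun j => ‖v j‖^2) (fun j => by positivity)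
      (le_of_eq hsum1) j₀
    refine le_trans hcg ?_
    have hinj : ((((Finset.univ.erase j₀).powersetCard (l-1)).filter
          (fun J => ∑ j ∈ J, ‖v j‖^2 ≤ 2*((l:ℝ)/n))).card : ℕ) ≤
        (Finset.univ.filter (fun p : Lam n l => ω ∈ T p)).card := by
      haveI := Lam_nonempty n l hl1 hln
      set y₀ : Lam n l := Classical.arbitrary _
      apply Finset.card_le_card_of_injOn
        (fun J => if h : j₀ ∉ J ∧ J.card = l - 1 then (⟨(j₀, J), h⟩ : Lam n l) else y₀)
      · intro J hJ
        rw [Finset.mem_coe] at hJ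
        show @dite (Lam n l) (j₀ ∉ J ∧ J.card = l - 1) _ (fun h => ⟨(j₀, J), h⟩) (fun _ => y₀) ∈
          Finset.univ.filter (fun p : Lam n l => ω ∈ T p)
        simp only [Finset.mem_filter, Finset.mem_powersetCard, Finset.subset_erase] at hJ
        obtain ⟨⟨⟨hJu, hj₀J⟩, hJc⟩, hJsum⟩ := hJ
        have hcond : j₀ ∉ J ∧ J.card = l-1 := ⟨hj₀J, hJc⟩
        refine Finset.mem_filter.mpr ⟨Finset.mem_univ _, ?_⟩
        refine cast (congrArg (fun p : Lam n l => ω ∈ T p) (dif_pos hcond).symm) ?_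
        intro hB
        obtain ⟨hB1, hB2⟩ := hB
        have hcore := core_lemma n l hl1 hln α κ w hα hκ hw v hv j₀ J hj₀J hJsum
          (l' ⟨(j₀, J), hcond⟩) (P ⟨(j₀, J), hcond⟩ ω) (A ω)
          (hPnorm ⟨(j₀, J), hcond⟩ ω)
          (fun j hne hnot => hPker ⟨(j₀, J), hcond⟩ ω j hne hnot)
          hAv hB1 hB2
        rw [← hW] at hcore
        rw [heinf] at hinf
        linarith
      · intro J₁ h₁ J₂ h₂ he
        simp only [Finset.mem_coe, Finset.mem_filter, Finset.mem_powersetCard,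
          Finset.subset_erase] at h₁ h₂
        have hc₁ : j₀ ∉ J₁ ∧ J₁.card = l-1 := ⟨h₁.1.1.2, h₁.1.2⟩
        have hc₂ : j₀ ∉ J₂ ∧ J₂.card = l-1 := ⟨h₂.1.1.2, h₂.1.2⟩
        simp only [dif_pos hc₁, dif_pos hc₂] at he
        have he' : (⟨(j₀, J₁), hc₁⟩ : Lam n l) = ⟨(j₀, J₂), hc₂⟩ :=
          (dif_pos hc₁).symm.trans (he.trans (dif_pos hc₂))
        exact congrArg (fun p : Lam n l => p.1.2) he'
    have hinj' : ((((Finset.univ.erase j₀).powersetCard (l-1)).filter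
          (fun J => ∑ j ∈ J, ‖v j‖^2 ≤ 2*((l:ℝ)/n))).card : ℝ) ≤
        ((Finset.univ.filter (fun p : Lam n l => ω ∈ T p)).card : ℝ) := by
      exact_mod_cast hinj
    linarith
  -- measure-theoretic part
  set U : Lam n l → Set Ω := fun p => toMeasurable ℙ (T p) with hU
  have hTU : ∀ p, T p ⊆ U p := fun p => subset_toMeasurable _ _
  have hUm : ∀ p, MeasurableSet (U p) := fun p => measurableSet_toMeasurable _ _
  have hUμ : ∀ p, ℙ (U p) = ℙ (T p) := fun p => measure_toMeasurable _
  set f : Ω → ℝ≥0∞ := fun ω => ∑ p : Lam n l, (U p).indicator (fun _ => (1:ℝ≥0∞)) ω with hf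
  have hfm : Measurable f :=
    Finset.measurable_sum _ (fun p _ => (measurable_const.indicator (hUm p)))
  set c : ℕ := (n-1).choose (l-1) with hc
  set S2 : Set Ω := {ω | (c : ℝ≥0∞) ≤ 2 * f ω} with hS2
  have hLS : L ⊆ S2 := by
    intro ω hω
    have h := hkey ω hω
    have hnatle : c ≤ 2 * (Finset.univ.filter (fun p : Lam n l => ω ∈ T p)).card := by
      exact_mod_cast h
    have hcard_f : (((Finset.univ.filter (fun p : Lam n l => ω ∈ T p)).card : ℕ) : ℝ≥0∞)
        ≤ f ω := by
      rw [Finset.card_eq_sum_ones]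
      push_cast
      calc (∑ _p ∈ Finset.univ.filter (fun p : Lam n l => ω ∈ T p), (1:ℝ≥0∞))
          ≤ ∑ p ∈ Finset.univ.filter (fun p : Lam n l => ω ∈ T p),
              (U p).indicator (fun _ => (1:ℝ≥0∞)) ω := by
            apply Finset.sum_le_sum
            intro p hp
            have hωT : ω ∈ T p := (Finset.mem_filter.mp hp).2
            rw [Set.indicator_of_mem (hTU p hωT)]
        _ ≤ f ω := Finset.sum_le_sum_of_subset (Finset.filter_subset _ _)
    show (c : ℝ≥0∞) ≤ 2 * f ω
    calc (c : ℝ≥0∞) ≤ ((2 * (Finset.univ.filter (fun p : Lam n l => ω ∈ T p)).card : ℕ) : ℝ≥0∞) := by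
          exact_mod_cast hnatle
      _ = 2 * (((Finset.univ.filter (fun p : Lam n l => ω ∈ T p)).card : ℕ) : ℝ≥0∞) := by
          push_cast; ring
      _ ≤ 2 * f ω := by
          exact mul_le_mul_right hcard_f 2
  have hS2m : MeasurableSet S2 := measurableSet_le measurable_const (hfm.const_mul 2)
  have h1 : ℙ L ≤ ℙ S2 := measure_mono hLS
  have h2 : (c : ℝ≥0∞) * ℙ S2 ≤ 2 * ∑ p : Lam n l, ℙ (T p) := by
    calc (c : ℝ≥0∞) * ℙ S2 = ∫⁻ _ω in S2, (c : ℝ≥0∞) ∂ℙ := by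
          rw [setLIntegral_const, mul_comm]
      _ ≤ ∫⁻ ω in S2, 2 * f ω ∂ℙ := setLIntegral_mono (hfm.const_mul 2) (fun ω hω => hω)
      _ ≤ ∫⁻ ω, 2 * f ω ∂ℙ := setLIntegral_le_lintegral _ _
      _ = 2 * ∫⁻ ω, f ω ∂ℙ := lintegral_const_mul _ hfm
      _ = 2 * ∑ p : Lam n l, ℙ (U p) := by
          rw [hf]
          rw [lintegral_finset_sum _ (fun p _ => measurable_const.indicator (hUm p))]
          congr 1
          apply Finset.sum_congr rfl
          intro p _
          rw [lintegral_indicator_const (hUm p), one_mul]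
      _ = 2 * ∑ p : Lam n l, ℙ (T p) := by
          congr 1
          exact Finset.sum_congr rfl (fun p _ => hUμ p)
  have hmain : (c : ℝ≥0∞) * ℙ L ≤ 2 * ∑ p : Lam n l, ℙ (T p) :=
    le_trans (mul_le_mul_right h1 _) h2
  -- convert to real
  have hTfin : ∀ p : Lam n l, ℙ (T p) ≠ ⊤ := fun p => (measure_lt_top _ _).ne
  have hsumfin : (∑ p : Lam n l, ℙ (T p)) ≠ ⊤ := ENNReal.sum_ne_top.mpr (fun p _ => hTfin p)
  have hRHSfin : (2 : ℝ≥0∞) * ∑ p : Lam n l, ℙ (T p) ≠ ⊤ :=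
    ENNReal.mul_ne_top (by norm_num) hsumfin
  have hreal : (c : ℝ) * (ℙ L).toReal ≤ 2 * ∑ p : Lam n l, (ℙ (T p)).toReal := by
    have := ENNReal.toReal_mono hRHSfin hmain
    rw [ENNReal.toReal_mul, ENNReal.toReal_mul, ENNReal.toReal_natCast,
      ENNReal.toReal_ofNat, ENNReal.toReal_sum (fun p _ => hTfin p)] at this
    exact this
  -- final algebra
  set Nn : ℕ := Fintype.card (Lam n l) with hNn
  have hNc : Nn ≤ n * c := card_Lam_le n l
  have hc0 : 0 < c := Nat.choose_pos (by omega)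
  haveI := Lam_nonempty n l hl1 hln
  have hN0 : 0 < Nn := Fintype.card_pos
  have hx0 : 0 ≤ (ℙ L).toReal := ENNReal.toReal_nonneg
  set x : ℝ := (ℙ L).toReal
  set Sr : ℝ := ∑ p : Lam n l, (ℙ (T p)).toReal
  have hNnx : (Nn : ℝ) * x ≤ (n : ℝ) * (2 * Sr) := by
    have h3 : (Nn : ℝ) ≤ (n : ℝ) * c := by exact_mod_cast hNc
    have h4 : (Nn : ℝ) * x ≤ (n : ℝ) * c * x := mul_le_mul_of_nonneg_right h3 hx0
    have h5 : (n : ℝ) * c * x = (n : ℝ) * (c * x) := by ring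
    have h6 : (n : ℝ) * (c * x) ≤ (n : ℝ) * (2 * Sr) := by
      apply mul_le_mul_of_nonneg_left hreal (by positivity)
    linarith
  have hN0R : (0:ℝ) < (Nn : ℝ) := by exact_mod_cast hN0
  have : x ≤ 2 * n * (Sr / Nn) := by
    rw [mul_div_assoc'] at *
    rw [le_div_iff₀ hN0R]
    nlinarith [hNnx]
  exact this

end
end

section
/- Let 1 ≤ l ≤ n and let v ∈ ℂⁿ with ‖v‖₂ = 1. If (j₀, J₀) is chosen uniformly at random from Λ(n,l), then the event V_v = { |v_{j₀}| = ‖v‖_∞ and Σ_{j ∈ J₀} |v_j|² ≤ 2l/n } has probability P(V_v) ≥ 1/(2n). -/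
open MeasureTheory

noncomputable section

/-- `Λ(n,l)` as a finset: pairs `(j₀, J₀)` with `j₀ ∈ [n]`, `J₀ ⊆ [n] \ {j₀}`,
`|J₀| = l - 1`. -/
def LamF (n l : ℕ) : Finset (Fin n × Finset (Fin n)) :=
  Finset.univ.filter (fun p => p.1 ∉ p.2 ∧ p.2.card = l - 1)

open Finset

lemma count_mem {α : Type*} [DecidableEq α] (T : Finset α) (k : ℕ) (j : α) (hj : j ∈ T) :
    ((T.powersetCard (k+1)).filter (fun J => j ∈ J)).card = (T.card - 1).choose k := by
  have : ((T.powersetCard (k+1)).filter (fun J => j ∈ J)).card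
      = ((T.erase j).powersetCard k).card := by
    apply Finset.card_bij' (fun J _ => J.erase j) (fun I _ => insert j I)
    · intro J hJ
      simp only [mem_filter] at hJ
      exact Finset.insert_erase hJ.2
    · intro I hI
      simp only [Finset.mem_powersetCard] at hI
      exact Finset.erase_insert (fun h => (Finset.mem_erase.mp (hI.1 h)).1 rfl)
    · intro J hJ
      simp only [mem_filter, Finset.mem_powersetCard] at hJ ⊢
      exact ⟨Finset.erase_subset_erase j hJ.1.1, by rw [Finset.card_erase_of_mem hJ.2, hJ.1.2]; rfl⟩
    · intro I hI
      simp only [Finset.mem_powersetCard] at hI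
      have hjI : j ∉ I := fun h => (Finset.mem_erase.mp (hI.1 h)).1 rfl
      simp only [mem_filter, Finset.mem_powersetCard]
      exact ⟨⟨Finset.insert_subset hj (hI.1.trans (Finset.erase_subset _ _)),
        by rw [Finset.card_insert_of_notMem hjI, hI.2]⟩, Finset.mem_insert_self _ _⟩
  rw [this, Finset.card_powersetCard, Finset.card_erase_of_mem hj]

lemma sum_powerset_sum {α : Type*} [DecidableEq α] (T : Finset α) (k : ℕ) (w : α → ℝ) :
    ∑ J ∈ T.powersetCard (k+1), ∑ j ∈ J, w j
      = ∑ j ∈ T, ((T.card - 1).choose k : ℝ) * w j := by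
  calc ∑ J ∈ T.powersetCard (k+1), ∑ j ∈ J, w j
      = ∑ J ∈ T.powersetCard (k+1), ∑ j ∈ T, if j ∈ J then w j else 0 := by
        refine Finset.sum_congr rfl fun J hJ => ?_
        rw [Finset.sum_ite_mem, Finset.inter_eq_right.mpr (Finset.mem_powersetCard.mp hJ).1]
    _ = ∑ j ∈ T, ∑ J ∈ T.powersetCard (k+1), if j ∈ J then w j else 0 := Finset.sum_comm
    _ = ∑ j ∈ T, ((T.card - 1).choose k : ℝ) * w j := by
        refine Finset.sum_congr rfl fun j hj => ?_
        rw [← Finset.sum_filter, Finset.sum_const, count_mem T k j hj, nsmul_eq_mul]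

lemma nat_choose_ineq (n l : ℕ) (h2 : 2 ≤ l) (hln : l ≤ n) :
    n * (n-2).choose (l-2) ≤ l * (n-1).choose (l-1) := by
  obtain ⟨m, rfl⟩ : ∃ m, n = m + 2 := ⟨n - 2, by omega⟩
  obtain ⟨k, rfl⟩ : ∃ k, l = k + 2 := ⟨l - 2, by omega⟩
  have hkm : k ≤ m := by omega
  simp only [Nat.add_sub_cancel, show m+2-1 = m+1 from rfl, show k+2-1 = k+1 from rfl]
  have h := Nat.add_one_mul_choose_eq m k
  have hpos := Nat.choose_pos hkm
  nlinarith [h, hpos, hkm]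

lemma card_LamF_fiber (n l : ℕ) (j₀ : Fin n) :
    ((LamF n l).filter (fun p => p.1 = j₀)).card = (n-1).choose (l-1) := by
  have : ((LamF n l).filter (fun p => p.1 = j₀)).card
      = ((Finset.univ.erase j₀).powersetCard (l-1)).card := by
    refine Finset.card_bij' (fun p _ => p.2) (fun J _ => (j₀, J)) ?_ ?_ ?_ ?_
    · intro p hp
      simp only [LamF, mem_filter, Finset.mem_univ, true_and] at hp
      obtain ⟨⟨h1, h2⟩, h3⟩ := hp
      rw [Finset.mem_powersetCard]
      exact ⟨Finset.subset_erase.mpr ⟨Finset.subset_univ _, h3 ▸ h1⟩, h2⟩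
    · intro J hJ
      rw [Finset.mem_powersetCard] at hJ
      simp only [LamF, mem_filter, Finset.mem_univ, true_and]
      exact ⟨⟨(Finset.subset_erase.mp hJ.1).2, hJ.2⟩, trivial⟩
    · intro p hp
      simp only [LamF, mem_filter, Finset.mem_univ, true_and] at hp
      exact Prod.ext hp.2.symm rfl
    · intro J _; rfl
  rw [this, Finset.card_powersetCard, Finset.card_erase_of_mem (Finset.mem_univ _),
    Finset.card_univ, Fintype.card_fin]

lemma card_LamF (n l : ℕ) : (LamF n l).card = n * (n-1).choose (l-1) := by
  rw [Finset.card_eq_sum_card_fiberwise (f := Prod.fst) (t := Finset.univ)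
    (fun x _ => Finset.mem_univ _)]
  simp [card_LamF_fiber n l, Finset.card_univ]

/-- **Balancing the coefficients of `v`.**  If `(j₀, J₀)` is chosen uniformly at random
from `Λ(n,l)`, then the event
`V_v = { |v_{j₀}| = ‖v‖_∞ and Σ_{j ∈ J₀} |v_j|² ≤ 2l/n }` has probability at least
`1/(2n)`. -/
theorem balancing_coefficients (n l : ℕ) (hl1 : 1 ≤ l) (hln : l ≤ n)
    (v : Fin n → ℂ) (hv : e2 v = 1) :
    (1 : ℝ) / (2 * n) ≤
      (((LamF n l).filter (fun p =>
          ‖v p.1‖ = einf v ∧ ∑ j ∈ p.2, ‖v j‖ ^ 2 ≤ 2 * (l : ℝ) / n)).card : ℝ) /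
        ((LamF n l).card : ℝ) := by
  classical
  have hn : 0 < n := lt_of_lt_of_le hl1 hln
  have hC1 : 0 < (n-1).choose (l-1) := Nat.choose_pos (by omega)
  have hsum : ∑ i, ‖v i‖^2 = 1 := by
    have h0 : 0 ≤ ∑ i, ‖v i‖^2 := Finset.sum_nonneg fun i _ => sq_nonneg _
    have h := hv; rw [e2] at h
    nlinarith [Real.sq_sqrt h0]
  have hne : Nonempty (Fin n) := ⟨⟨0, hn⟩⟩
  obtain ⟨j₀, hj₀⟩ := Finite.exists_max (fun i => ‖v i‖)
  have heinf : ‖v j₀‖ = einf v := by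
    rw [einf]
    exact le_antisymm (le_ciSup (f := fun i => ‖v i‖) (Set.Finite.bddAbove (Set.finite_range _)) j₀) (ciSup_le hj₀)
  set T := Finset.univ.erase j₀ with hTdef
  have hTcard : T.card = n - 1 := by
    rw [hTdef, Finset.card_erase_of_mem (Finset.mem_univ _), Finset.card_univ, Fintype.card_fin]
  set S := T.powersetCard (l-1) with hSdef
  have hScard : S.card = (n-1).choose (l-1) := by rw [hSdef, Finset.card_powersetCard, hTcard]
  set P : Finset (Fin n) → Prop := fun J => ∑ j ∈ J, ‖v j‖^2 ≤ 2*(l:ℝ)/n with hP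
  set Sg := S.filter P with hSgdef
  set Sb := S.filter (fun J => ¬ P J) with hSbdef
  have hsplit : Sg.card + Sb.card = S.card := Finset.card_filter_add_card_filter_not _
  have hbad : 2 * Sb.card ≤ S.card := by
    rcases eq_or_lt_of_le hl1 with h1 | hl2
    · have hSbe : Sb = ∅ := by
        rw [hSbdef]
        apply Finset.filter_false_of_mem
        intro J hJ
        rw [hSdef, Finset.mem_powersetCard] at hJ
        have hJe : J = ∅ := Finset.card_eq_zero.mp (by rw [hJ.2, ← h1])
        simp only [hP, hJe, Finset.sum_empty, not_not]
        positivity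
      rw [hSbe]
      simp
    · have hl2' : 2 ≤ l := hl2
      obtain ⟨k, hk⟩ : ∃ k, l - 1 = k + 1 := ⟨l - 2, by omega⟩
      have hn0 : (0:ℝ) < n := by positivity
      have hl0 : (0:ℝ) < l := by positivity
      have hMar : (Sb.card : ℝ) * (2*(l:ℝ)/n) ≤ ∑ J ∈ Sb, ∑ j ∈ J, ‖v j‖^2 := by
        have h := Finset.card_nsmul_le_sum Sb (fun J => ∑ j ∈ J, ‖v j‖^2) (2*(l:ℝ)/n) ?_
        · rwa [nsmul_eq_mul] at h
        · intro J hJ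
          rw [hSbdef, Finset.mem_filter] at hJ
          exact le_of_not_ge hJ.2
      have hsub : ∑ J ∈ Sb, ∑ j ∈ J, ‖v j‖^2 ≤ ∑ J ∈ S, ∑ j ∈ J, ‖v j‖^2 :=
        Finset.sum_le_sum_of_subset_of_nonneg (Finset.filter_subset _ _)
          (fun J _ _ => Finset.sum_nonneg fun j _ => sq_nonneg _)
      have hswap : ∑ J ∈ S, ∑ j ∈ J, ‖v j‖^2
          = ∑ j ∈ T, ((T.card-1).choose k : ℝ) * ‖v j‖^2 := by
        rw [hSdef, hk]; exact sum_powerset_sum T k _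
      have hTsum : ∑ j ∈ T, ‖v j‖^2 ≤ 1 := by
        rw [← hsum]
        exact Finset.sum_le_sum_of_subset_of_nonneg (Finset.subset_univ T)
          (fun j _ _ => sq_nonneg _)
      have hC2 : (T.card - 1).choose k = (n-2).choose (l-2) := by
        rw [hTcard]
        congr 1 <;> omega
      have hchain : (Sb.card : ℝ) * (2*(l:ℝ)/n) ≤ ((n-2).choose (l-2) : ℝ) := by
        calc (Sb.card : ℝ) * (2*(l:ℝ)/n) ≤ ∑ J ∈ Sb, ∑ j ∈ J, ‖v j‖^2 := hMar
          _ ≤ ∑ J ∈ S, ∑ j ∈ J, ‖v j‖^2 := hsub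
          _ = ∑ j ∈ T, ((T.card-1).choose k : ℝ) * ‖v j‖^2 := hswap
          _ = ((n-2).choose (l-2) : ℝ) * ∑ j ∈ T, ‖v j‖^2 := by
              rw [hC2, Finset.mul_sum]
          _ ≤ ((n-2).choose (l-2) : ℝ) * 1 := by
              apply mul_le_mul_of_nonneg_left hTsum (Nat.cast_nonneg _)
          _ = ((n-2).choose (l-2) : ℝ) := mul_one _
      have hcast : ((n:ℝ) * ((n-2).choose (l-2) : ℝ)) ≤ (l:ℝ) * ((n-1).choose (l-1) : ℝ) := by
        exact_mod_cast nat_choose_ineq n l hl2' hln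
      have h3 : (Sb.card : ℝ) * (2*(l:ℝ)) ≤ ((n-2).choose (l-2) : ℝ) * n := by
        have h4 : (Sb.card : ℝ) * (2*(l:ℝ)) / n ≤ ((n-2).choose (l-2) : ℝ) := by
          rw [mul_div_assoc]; exact hchain
        calc (Sb.card : ℝ) * (2*(l:ℝ)) = (Sb.card : ℝ) * (2*(l:ℝ)) / n * n := by
              field_simp
          _ ≤ ((n-2).choose (l-2) : ℝ) * n := by
              exact mul_le_mul_of_nonneg_right h4 (le_of_lt hn0)
      have h5 : (2 * Sb.card : ℝ) * l ≤ ((n-1).choose (l-1) : ℝ) * l := by nlinarith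
      have h6 : (2 * Sb.card : ℝ) ≤ ((n-1).choose (l-1) : ℝ) :=
        le_of_mul_le_mul_right h5 hl0
      rw [hScard]
      exact_mod_cast h6
  -- injection from Sg into the event
  have hA : Sg.card ≤ ((LamF n l).filter (fun p =>
      ‖v p.1‖ = einf v ∧ ∑ j ∈ p.2, ‖v j‖ ^ 2 ≤ 2 * (l : ℝ) / n)).card := by
    apply Finset.card_le_card_of_injOn (fun J => (j₀, J))
    · intro J hJ
      rw [Finset.mem_coe, hSgdef, Finset.mem_filter] at hJ
      obtain ⟨hJS, hJP⟩ := hJ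
      rw [hSdef, Finset.mem_powersetCard, hTdef, Finset.subset_erase] at hJS
      rw [Finset.mem_coe, Finset.mem_filter]
      refine ⟨?_, heinf, hJP⟩
      rw [LamF, Finset.mem_filter]
      exact ⟨Finset.mem_univ _, hJS.1.2, hJS.2⟩
    · intro J1 _ J2 _ h
      exact congrArg Prod.snd h
  -- final arithmetic
  have hBcard := card_LamF n l
  have hBpos : (0:ℝ) < ((LamF n l).card : ℝ) := by
    rw [hBcard]
    exact_mod_cast Nat.mul_pos hn hC1
  rw [div_le_div_iff₀ (by positivity) hBpos, hBcard]
  have hkey : n * (n-1).choose (l-1) ≤ 2 * n * (((LamF n l).filter (fun p =>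
      ‖v p.1‖ = einf v ∧ ∑ j ∈ p.2, ‖v j‖ ^ 2 ≤ 2 * (l : ℝ) / n)).card) := by
    have h7 : (n-1).choose (l-1) ≤ 2 * Sg.card := by omega
    calc n * (n-1).choose (l-1) ≤ n * (2 * Sg.card) := Nat.mul_le_mul_left _ h7
      _ ≤ 2 * n * _ := by rw [← Nat.mul_assoc, Nat.mul_comm n 2]
                          exact Nat.mul_le_mul_left _ hA
  have hR := (Nat.cast_le (α := ℝ)).mpr hkey
  push_cast at hR
  push_cast
  linarith

end
end

section
/- Let l' ≤ l ≤ n and let Q be an l' × n complex matrix of the following form: for i ≤ l', the i-th row of Q is q_i = (0,…,0, q_{ii}, 0,…,0, q̄_iᵀ), i.e. Q_{ij} = 0 for all j ≤ l with j ≠ i, Q_{ii} = q_{ii}, and the entries in columns l+1,…,n are arbitrary. Assume the rows q₁,…,q_{l'} of Q are linearly independent. Let P be any l' × n matrix with orthonormal rows whose row span equals the row span of Q. Then: (i) the quantities ‖P e_i‖₂, i ≤ n, are determined by Q and do not depend on the choice of such P; (ii) for every i ≤ l', ‖P e_i‖₂ = |q_{ii}| / d(q_i, E_i), where E_i = span(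 q_j : j ≤ l', j ≠ i ); (iii) ‖P e_i‖₂ = 0 for every l' < i ≤ l. -/
noncomputable section

/-- Euclidean distance from a point to a subspace of `ℂⁿ`. -/
def distC {n : ℕ} (x : Fin n → ℂ) (E : Submodule ℂ (Fin n → ℂ)) : ℝ :=
  ⨅ y : E, e2 (x - (y : Fin n → ℂ))

/-- `P` has orthonormal rows and the same row span as `Q`. -/
def IsOrthoRowBasisOf {l' n : ℕ} (P Q : Matrix (Fin l') (Fin n) ℂ) : Prop :=
  P * Matrix.conjTranspose P = 1 ∧
    Submodule.span ℂ (Set.range fun i => P i) = Submodule.span ℂ (Set.range fun i => Q i)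

open scoped ComplexConjugate

variable {n l' : ℕ}

def conjSL (n : ℕ) : (Fin n → ℂ) →ₛₗ[starRingEnd ℂ] EuclideanSpace ℂ (Fin n) where
  toFun x := (WithLp.equiv 2 (Fin n → ℂ)).symm (fun j => conj (x j))
  map_add' x y := by ext j; simp
  map_smul' a x := by ext j; simp [mul_comm]

lemma conjSL_apply (x : Fin n → ℂ) (j : Fin n) : conjSL n x j = conj (x j) := rfl

/-- the conjugate row span of Q -/
def Wspan (Q : Matrix (Fin l') (Fin n) ℂ) : Submodule ℂ (EuclideanSpace ℂ (Fin n)) :=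
  Submodule.span ℂ (Set.range fun r => conjSL n (Q r))

lemma span_conj_rows (P : Matrix (Fin l') (Fin n) ℂ) :
    Submodule.span ℂ (Set.range fun r => conjSL n (P r)) =
      Submodule.map (conjSL n) (Submodule.span ℂ (Set.range fun r => P r)) := by
  rw [Submodule.map_span, ← Set.range_comp]
  rfl

lemma Wspan_eq {P Q : Matrix (Fin l') (Fin n) ℂ} (hP : IsOrthoRowBasisOf P Q) :
    Submodule.span ℂ (Set.range fun r => conjSL n (P r)) = Wspan Q := by
  rw [Wspan, span_conj_rows, span_conj_rows, hP.2]

lemma ortho_rows {P Q : Matrix (Fin l') (Fin n) ℂ} (hP : IsOrthoRowBasisOf P Q) :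
    Orthonormal ℂ (fun r => conjSL n (P r)) := by
  rw [orthonormal_iff_ite]
  intro r s
  have h1 := congrFun (congrFun hP.1 r) s
  rw [Matrix.mul_apply] at h1
  have : (inner ℂ (conjSL n (P r)) (conjSL n (P s)) : ℂ)
      = ∑ j, P r j * conj (P s j) := by
    rw [PiLp.inner_apply]
    apply Finset.sum_congr rfl
    intro j _
    rw [conjSL_apply, conjSL_apply, RCLike.inner_apply]
    simp [mul_comm]
  rw [this]
  simp only [Matrix.conjTranspose_apply, Matrix.one_apply] at h1
  simpa using h1

lemma key_col {P Q : Matrix (Fin l' ) (Fin n) ℂ} (hP : IsOrthoRowBasisOf P Q) (i : Fin n) :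
    e2 (fun r => P r i) =
      ‖(Submodule.orthogonalProjectionOnto (Wspan Q) (EuclideanSpace.single i 1) : EuclideanSpace ℂ (Fin n))‖ := by
  set v : Fin l' → EuclideanSpace ℂ (Fin n) := fun r => conjSL n (P r) with hv
  have hvo : Orthonormal ℂ v := ortho_rows hP
  set x : EuclideanSpace ℂ (Fin n) := EuclideanSpace.single i 1 with hx
  set p : EuclideanSpace ℂ (Fin n) := ∑ r, (P r i) • v r with hp
  have hinner : ∀ r, (inner ℂ (v r) x : ℂ) = P r i := by
    intro r
    rw [hx, PiLp.inner_apply]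
    simp only [EuclideanSpace.single_apply]
    rw [Finset.sum_eq_single i]
    · simp [hv, conjSL_apply]
    · intro b _ hb; simp [hb]
    · simp
  have hproj : (Submodule.orthogonalProjectionOnto (Wspan Q) x : EuclideanSpace ℂ (Fin n)) = p := by
    apply Submodule.eq_starProjection_of_mem_of_inner_eq_zero
    · rw [← Wspan_eq hP, hp]
      exact Submodule.sum_mem _ fun r _ => Submodule.smul_mem _ _
        (Submodule.subset_span (Set.mem_range_self r))
    · intro w hw
      rw [← Wspan_eq hP] at hw
      induction hw using Submodule.span_induction with
      | mem w hw =>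
        obtain ⟨s, rfl⟩ := hw
        rw [inner_sub_left]
        have hite := orthonormal_iff_ite.mp hvo
        have h1 : (inner ℂ p (v s) : ℂ) = conj (P s i) := by
          rw [hp, sum_inner]
          rw [Finset.sum_eq_single s]
          · rw [inner_smul_left, hite s s]; simp
          · intro b _ hb; rw [inner_smul_left, hite b s]; simp [hb]
          · simp
        have h2 : (inner ℂ x (v s) : ℂ) = conj (P s i) := by
          rw [← inner_conj_symm, hinner s]
        rw [h1, h2, sub_self]
      | zero => simp
      | add a b _ _ ha hb => rw [inner_add_right, ha, hb, add_zero]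
      | smul c a _ ha => rw [inner_smul_right, ha, mul_zero]
  rw [hproj]
  have hn : ‖p‖ ^ 2 = ∑ r, ‖P r i‖ ^ 2 := by
    have := hvo.inner_sum (fun r => P r i) (fun r => P r i) Finset.univ
    have hre : ((∑ r, conj (P r i) * P r i : ℂ)).re = ∑ r, ‖P r i‖ ^ 2 := by
      rw [Complex.re_sum]
      apply Finset.sum_congr rfl
      intro r _
      rw [Complex.conj_mul']
      norm_cast
    calc ‖p‖ ^ 2 = (inner ℂ p p : ℂ).re := by
          rw [← inner_self_eq_norm_sq (𝕜 := ℂ) p]; rfl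
      _ = ∑ r, ‖P r i‖ ^ 2 := by rw [hp, this]; exact hre
  unfold e2
  simp only []
  rw [← hn, Real.sqrt_sq (norm_nonneg p)]

lemma inner_conjSL_single (q : Fin n → ℂ) (i : Fin n) :
    (inner ℂ (conjSL n q) (EuclideanSpace.single i 1) : ℂ) = q i := by
  rw [PiLp.inner_apply]
  simp only [EuclideanSpace.single_apply]
  rw [Finset.sum_eq_single i]
  · simp [conjSL_apply]
  · intro b _ hb; simp [hb]
  · simp

lemma proj_single_zero {Q : Matrix (Fin l') (Fin n) ℂ} {i : Fin n}
    (h0 : ∀ r : Fin l', Q r i = 0) :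
    (Submodule.orthogonalProjectionOnto (Wspan Q) (EuclideanSpace.single i 1)
      : EuclideanSpace ℂ (Fin n)) = 0 := by
  apply Submodule.eq_starProjection_of_mem_of_inner_eq_zero (Submodule.zero_mem _)
  intro w hw
  rw [sub_zero]
  induction hw using Submodule.span_induction with
  | mem w hw =>
    obtain ⟨r, rfl⟩ := hw
    rw [← inner_conj_symm, inner_conjSL_single, h0 r, map_zero]
  | zero => simp
  | add a b _ _ ha hb => rw [inner_add_right, ha, hb, add_zero]
  | smul c a _ ha => rw [inner_smul_right, ha, mul_zero]

lemma conjSL_inj : Function.Injective (conjSL n) := by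
  intro x y h
  ext j
  have h2 : conj (x j) = conj (y j) := congrArg (fun v => v j) h
  exact star_injective h2

lemma e2_eq_norm_conj (x : Fin n → ℂ) : e2 x = ‖conjSL n x‖ := by
  rw [EuclideanSpace.norm_eq]
  unfold e2
  congr 1
  apply Finset.sum_congr rfl
  intro j _
  rw [conjSL_apply, RCLike.norm_conj]

lemma proj_single_diag {l : ℕ} (hl'l : l' ≤ l) (hln : l ≤ n)
    {Q : Matrix (Fin l') (Fin n) ℂ}
    (hQ0 : ∀ (i : Fin l') (j : Fin n), (j : ℕ) < l → (j : ℕ) ≠ (i : ℕ) → Q i j = 0)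
    (hQind : LinearIndependent ℂ fun i : Fin l' => Q i) (i : Fin l') :
    ‖(Submodule.orthogonalProjectionOnto (Wspan Q)
        (EuclideanSpace.single ⟨(i : ℕ), lt_of_lt_of_le i.isLt (le_trans hl'l hln)⟩ 1)
        : EuclideanSpace ℂ (Fin n))‖ =
      ‖Q i ⟨(i : ℕ), lt_of_lt_of_le i.isLt (le_trans hl'l hln)⟩‖ /
        distC (Q i) (Submodule.span ℂ {x | ∃ j : Fin l', j ≠ i ∧ x = Q j}) := by
  set i' : Fin n := ⟨(i : ℕ), lt_of_lt_of_le i.isLt (le_trans hl'l hln)⟩ with hi'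
  set S₀ : Set (Fin n → ℂ) := {x | ∃ j : Fin l', j ≠ i ∧ x = Q j} with hS₀def
  have hS₀ : S₀ = (fun j : Fin l' => Q j) '' {j | j ≠ i} := by
    ext x
    constructor
    · rintro ⟨j, hj, rfl⟩; exact ⟨j, hj, rfl⟩
    · rintro ⟨j, hj, rfl⟩; exact ⟨j, hj, rfl⟩
  set E : Submodule ℂ (EuclideanSpace ℂ (Fin n)) :=
    Submodule.map (conjSL n) (Submodule.span ℂ S₀) with hEdef
  have hE : E = Submodule.span ℂ (conjSL n '' S₀) := Submodule.map_span _ _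
  have hgen : ∀ j : Fin l', j ≠ i → conjSL n (Q j) ∈ E := by
    intro j hj
    rw [hE]
    exact Submodule.subset_span ⟨Q j, ⟨j, hj, rfl⟩, rfl⟩
  have hEW : E ≤ Wspan Q := by
    rw [hE]
    apply Submodule.span_le.mpr
    rintro _ ⟨x, ⟨j, _, rfl⟩, rfl⟩
    exact Submodule.subset_span (Set.mem_range_self j)
  set u : EuclideanSpace ℂ (Fin n) := conjSL n (Q i) with hu
  have huW : u ∈ Wspan Q := Submodule.subset_span (Set.mem_range_self i)
  set pu : EuclideanSpace ℂ (Fin n) := (Submodule.orthogonalProjectionOnto E u : EuclideanSpace ℂ (Fin n))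
    with hpu
  set u' : EuclideanSpace ℂ (Fin n) := u - pu with hu'
  have hu'E : u' ∈ Eᗮ := Submodule.sub_starProjection_mem_orthogonal u
  have hu'W : u' ∈ Wspan Q := Submodule.sub_mem _ huW (hEW (Submodule.orthogonalProjectionOnto E u).2)
  have hu'ne : u' ≠ 0 := by
    intro h
    have huE : u ∈ E := by
      have : u = pu := by rwa [sub_eq_zero] at h
      rw [this]
      exact (Submodule.orthogonalProjectionOnto E u).2
    rw [hEdef] at huE
    obtain ⟨y, hy, hyu⟩ := Submodule.mem_map.mp huE
    have : y = Q i := conjSL_inj hyu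
    rw [this] at hy
    rw [hS₀] at hy
    exact hQind.notMem_span_image (by simp) hy
  have hnu' : ‖u'‖ ≠ 0 := norm_ne_zero_iff.mpr hu'ne
  set c : ℂ := Q i i' / ((‖u'‖ : ℂ) ^ 2) with hc
  have hproj : (Submodule.orthogonalProjectionOnto (Wspan Q) (EuclideanSpace.single i' 1)
      : EuclideanSpace ℂ (Fin n)) = c • u' := by
    apply Submodule.eq_starProjection_of_mem_of_inner_eq_zero
    · exact Submodule.smul_mem _ _ hu'W
    · intro w hw
      induction hw using Submodule.span_induction with
      | mem w hw =>
        obtain ⟨j, rfl⟩ := hw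
        rw [inner_sub_left, inner_smul_left]
        rcases eq_or_ne j i with rfl | hj
        · have h1 : (inner ℂ (EuclideanSpace.single i' 1) u : ℂ) = conj (Q j i') := by
            rw [← inner_conj_symm, hu, inner_conjSL_single]
          have h2 : (inner ℂ u' u : ℂ) = (‖u'‖ : ℂ) ^ 2 := by
            have hdecomp : u = pu + u' := by rw [hu']; abel
            rw [hdecomp, inner_add_right]
            have : (inner ℂ u' pu : ℂ) = 0 := by
              rw [← inner_conj_symm]
              rw [hu'E pu (Submodule.orthogonalProjectionOnto E u).2]
              simp
            rw [this, zero_add, inner_self_eq_norm_sq_to_K]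
            norm_cast
          rw [h1, h2, hc, map_div₀, map_pow, Complex.conj_ofReal]
          have : (‖u'‖ : ℂ) ^ 2 ≠ 0 := by
            simpa using hnu'
          field_simp [show (‖u'‖ : ℂ) ≠ 0 by exact_mod_cast hnu']
          ring
        · have h1 : (inner ℂ (EuclideanSpace.single i' 1) (conjSL n (Q j)) : ℂ) = 0 := by
            rw [← inner_conj_symm, inner_conjSL_single]
            have : Q j i' = 0 := by
              apply hQ0 j i' (lt_of_lt_of_le i.isLt hl'l)
              simp only [hi']
              exact fun h => hj (Fin.ext h.symm)
            rw [this, map_zero]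
          have h2 : (inner ℂ u' (conjSL n (Q j)) : ℂ) = 0 := by
            rw [← inner_conj_symm, hu'E _ (hgen j hj)]
            simp
          rw [h1, h2, mul_zero, sub_zero]
      | zero => simp
      | add a b _ _ ha hb => rw [inner_add_right, ha, hb, add_zero]
      | smul d a _ ha => rw [inner_smul_right, ha, mul_zero]
  have hdist : distC (Q i) (Submodule.span ℂ S₀) = ‖u'‖ := by
    have hmin : ‖u - pu‖ = ⨅ y : E, ‖u - (y : EuclideanSpace ℂ (Fin n))‖ :=
      Submodule.starProjection_minimal u
    set f : Submodule.span ℂ S₀ → E :=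
      fun y => ⟨conjSL n (y : Fin n → ℂ), Submodule.mem_map_of_mem y.2⟩ with hf
    have hsurj : Function.Surjective f := by
      rintro ⟨z, hz⟩
      obtain ⟨y, hy, rfl⟩ := Submodule.mem_map.mp hz
      exact ⟨⟨y, hy⟩, rfl⟩
    have heach : ∀ y : Submodule.span ℂ S₀,
        e2 (Q i - (y : Fin n → ℂ)) = ‖u - (f y : EuclideanSpace ℂ (Fin n))‖ := by
      intro y
      rw [e2_eq_norm_conj, map_sub]
    rw [distC]
    rw [iInf_congr heach]
    rw [← hsurj.iInf_comp (g := fun z : E => ‖u - (z : EuclideanSpace ℂ (Fin n))‖)] at hmin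
    rw [← hmin, hu']
  rw [hproj, hdist, norm_smul, hc]
  rw [norm_div]
  have h3 : ‖((‖u'‖:ℂ) ^ 2)‖ = ‖u'‖ ^ 2 := by
    rw [norm_pow, Complex.norm_real, Real.norm_eq_abs, abs_norm]
  rw [h3]
  field_simp


/-- **Norms of columns of `P` via distances.**  Let `Q` be an `l' × n` matrix whose
`i`-th row has all entries in the first `l` columns equal to zero except possibly the
diagonal one `q_{ii}`, and whose rows are linearly independent.  Let `P` be any matrix
with orthonormal rows and the same row span as `Q`.  Then the column norms `‖P e_i‖₂`
do not depend on the choice of `P`; for `i ≤ l'` one has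
`‖P e_i‖₂ = |q_{ii}| / d(q_i, E_i)` with `E_i` the span of the other rows; and
`‖P e_i‖₂ = 0` for `l' < i ≤ l`.  (Indices are `0`-based.) -/
theorem column_norms_via_distances (n l l' : ℕ) (hl'l : l' ≤ l) (hln : l ≤ n)
    (Q : Matrix (Fin l') (Fin n) ℂ)
    (hQ0 : ∀ (i : Fin l') (j : Fin n), (j : ℕ) < l → (j : ℕ) ≠ (i : ℕ) → Q i j = 0)
    (hQind : LinearIndependent ℂ fun i : Fin l' => Q i) :
    (∀ P P' : Matrix (Fin l') (Fin n) ℂ, IsOrthoRowBasisOf P Q → IsOrthoRowBasisOf P' Q →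
      ∀ i : Fin n, e2 (fun r => P r i) = e2 (fun r => P' r i)) ∧
    (∀ P : Matrix (Fin l') (Fin n) ℂ, IsOrthoRowBasisOf P Q →
      ∀ i : Fin l',
        e2 (fun r => P r ⟨(i : ℕ), lt_of_lt_of_le i.isLt (le_trans hl'l hln)⟩) =
          ‖Q i ⟨(i : ℕ), lt_of_lt_of_le i.isLt (le_trans hl'l hln)⟩‖ /
            distC (Q i) (Submodule.span ℂ {x | ∃ j : Fin l', j ≠ i ∧ x = Q j})) ∧
    (∀ P : Matrix (Fin l') (Fin n) ℂ, IsOrthoRowBasisOf P Q →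
      ∀ i : Fin n, l' ≤ (i : ℕ) → (i : ℕ) < l → e2 (fun r => P r i) = 0) := by
  refine ⟨?_, ?_, ?_⟩
  · intro P P' hP hP' i
    rw [key_col hP i, key_col hP' i]
  · intro P hP i
    rw [key_col hP _, proj_single_diag hl'l hln hQ0 hQind i]
  · intro P hP i hi1 hi2
    rw [key_col hP i, proj_single_zero (fun r => hQ0 r i hi2 (by
      have := r.isLt; omega)), norm_zero]

end
end
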